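/- For 0 < α < 1 and c > 0, the integral (1/Γ(1-α)) ∫_0^∞ exp(-c²/s - s) s^{-α} ds equals 2 Γ(1-α)^{-1} c^{1-α} K_{1-α}(2c), where K_ν(z) = (1/2) Γ(ν) Γ(1-ν) (I_{-ν}(z) - I_ν(z)). -/

import Mathlib

open Real MeasureTheory

/-- The modified Bessel function of the first kind. -/
noncomputable def besselI (ν z : ℝ) : ℝ :=
  (z / 2) ^ ν * ∑' n : ℕ, (z / 2) ^ (2 * n) / (n.factorial * Real.Gamma (n + ν + 1))

/-- The modified Bessel function of the second kind for 0 < ν < 1. -/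
noncomputable def besselK (ν z : ℝ) : ℝ :=
  1 / 2 * Real.Gamma ν * Real.Gamma (1 - ν) * (besselI (-ν) z - besselI ν z)

namespace BK

open Set Filter

noncomputable def Ig (b x : ℝ) : ℝ :=
  ∫ s in Set.Ioi (0:ℝ), Real.exp (-(x/s) - s) * s ^ (b - 1)

lemma contOn (y b : ℝ) :
    ContinuousOn (fun s : ℝ => Real.exp (-(y/s) - s) * s ^ (b - 1)) (Set.Ioi 0) := by
  apply ContinuousOn.mul
  · exact Real.continuous_exp.comp_continuousOn
      (((continuousOn_const.div continuousOn_id fun s hs => ne_of_gt hs).neg).sub continuousOn_id)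
  · exact ContinuousOn.rpow_const continuousOn_id fun s hs => Or.inl (ne_of_gt hs)

lemma integrableOn_ig (b : ℝ) {x : ℝ} (hx : 0 < x) :
    IntegrableOn (fun s : ℝ => Real.exp (-(x/s) - s) * s ^ (b - 1)) (Set.Ioi 0) := by
  obtain ⟨k, hk⟩ : ∃ k : ℕ, 0 < b + k := by
    refine ⟨⌈|b|⌉₊ + 1, ?_⟩
    have h1 : |b| ≤ (⌈|b|⌉₊ : ℝ) := Nat.le_ceil _
    push_cast
    have h2 := neg_abs_le b
    linarith
  have hΓ : IntegrableOn (fun s : ℝ => (Real.exp (-s) * s ^ (b + k - 1))) (Set.Ioi 0) :=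
    Real.GammaIntegral_convergent hk
  refine Integrable.mono' (hΓ.const_mul ((k.factorial : ℝ) / x ^ (k:ℕ)))
    ((contOn x b).aestronglyMeasurable measurableSet_Ioi) ?_
  rw [ae_restrict_iff' measurableSet_Ioi]
  refine Filter.Eventually.of_forall fun s hs => ?_
  have hs0 : (0:ℝ) < s := hs
  have h2 : (x/s) ^ (k:ℕ) / (k.factorial : ℝ) ≤ Real.exp (x/s) :=
    Real.pow_div_factorial_le_exp (x := x/s) (by positivity) k
  have h1 : Real.exp (-(x/s)) ≤ (k.factorial : ℝ) * (s/x) ^ (k:ℕ) := by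
    have key : (((k.factorial:ℝ)) * (s/x)^(k:ℕ))⁻¹ = (x/s)^(k:ℕ) / (k.factorial:ℝ) := by
      rw [mul_inv, ← inv_pow, inv_div]; ring
    rw [Real.exp_neg, inv_le_comm₀ (Real.exp_pos _) (by positivity), key]
    exact h2
  rw [Real.norm_eq_abs, abs_of_nonneg (by positivity)]
  have e1 : Real.exp (-(x/s) - s) * s ^ (b-1)
      = Real.exp (-(x/s)) * (Real.exp (-s) * s ^ (b-1)) := by
    rw [show -(x/s) - s = -(x/s) + -s by ring, Real.exp_add, mul_assoc]
  have e2 : s ^ (b + k - 1) = s ^ (k:ℕ) * s ^ (b-1) := by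
    rw [← Real.rpow_natCast s k, ← Real.rpow_add hs0]; ring_nf
  have e3 : (k.factorial:ℝ) * (s/x)^(k:ℕ) * (Real.exp (-s) * s^(b-1))
      = (k.factorial:ℝ)/x^(k:ℕ) * (Real.exp (-s) * s^(b + k - 1)) := by
    rw [e2, div_pow]; ring
  rw [e1, ← e3]
  exact mul_le_mul_of_nonneg_right h1 (by positivity)



lemma Ig_def (b x : ℝ) :
    Ig b x = ∫ s in Set.Ioi (0:ℝ), Real.exp (-(x/s) - s) * s ^ (b - 1) := rfl


lemma hasDerivAt_Ig (b : ℝ) {x : ℝ} (hx : 0 < x) :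
    HasDerivAt (fun y => Ig b y) (-(Ig (b-1) x)) x := by
  have key := hasDerivAt_integral_of_dominated_loc_of_deriv_le
    (μ := volume.restrict (Set.Ioi (0:ℝ)))
    (F := fun y s => Real.exp (-(y/s) - s) * s ^ (b - 1))
    (F' := fun y s => -(Real.exp (-(y/s) - s) * s ^ (b - 1 - 1)))
    (x₀ := x) (s := Metric.ball x (x/2))
    (bound := fun s => Real.exp (-((x/2)/s) - s) * s ^ (b - 1 - 1))
    (Metric.ball_mem_nhds x (half_pos hx))
    (Filter.Eventually.of_forall fun y =>
      (contOn y b).aestronglyMeasurable measurableSet_Ioi)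
    (integrableOn_ig b hx)
    (((contOn x (b-1)).aestronglyMeasurable measurableSet_Ioi).neg)
    ?_ (integrableOn_ig (b-1) (half_pos hx)) ?_
  · have h2 := key.2
    rw [integral_neg] at h2
    have e : (∫ s in Set.Ioi (0:ℝ), Real.exp (-(x/s) - s) * s ^ (b - 1 - 1)) = Ig (b-1) x :=
      (Ig_def (b-1) x).symm
    rw [e] at h2
    exact h2
  · -- bound
    rw [ae_restrict_iff' measurableSet_Ioi]
    refine Filter.Eventually.of_forall fun s hs y hy => ?_
    have hs0 : (0:ℝ) < s := hs
    have hy2 : x/2 < y := by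
      have := abs_lt.1 (mem_ball_iff_norm.1 hy)
      linarith [this.1]
    rw [norm_neg, Real.norm_eq_abs, abs_of_nonneg (by positivity)]
    have : Real.exp (-(y/s) - s) ≤ Real.exp (-((x/2)/s) - s) := by
      apply Real.exp_le_exp.2
      have hdiv : (x/2)/s ≤ y/s := by gcongr
      linarith
    exact mul_le_mul_of_nonneg_right this (by positivity)
  · -- differentiability
    rw [ae_restrict_iff' measurableSet_Ioi]
    refine Filter.Eventually.of_forall fun s hs y hy => ?_
    have hs0 : (0:ℝ) < s := hs
    have h1 : HasDerivAt (fun y : ℝ => -(y/s) - s) (-(1/s)) y :=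
      (((hasDerivAt_id y).div_const s).neg).sub_const s
    have h2 := (h1.exp).mul_const (s ^ (b-1))
    refine h2.congr_deriv (Eq.symm ?_)
    have e : s ^ (b-1-1) = s ^ (b-1) / s := Real.rpow_sub_one (ne_of_gt hs0) _
    show -(Real.exp (-(y/s) - s) * s ^ (b - 1 - 1)) = _
    rw [e]
    ring


lemma Ig_symm (b : ℝ) {x : ℝ} (hx : 0 < x) : Ig b x = x ^ b * Ig (-b) x := by
  have himg : (fun s : ℝ => x / s) '' (Set.Ioi 0) = Set.Ioi 0 := by
    ext u
    constructor
    · rintro ⟨s, hs, rfl⟩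
      exact div_pos hx hs
    · intro hu
      exact ⟨x / u, div_pos hx hu, by field_simp⟩
  have hderiv : ∀ s ∈ Set.Ioi (0:ℝ),
      HasDerivWithinAt (fun s : ℝ => x / s) (-(x / s^2)) (Set.Ioi 0) s := by
    intro s hs
    have hs0 : (0:ℝ) < s := hs
    have h := (hasDerivAt_inv (ne_of_gt hs0)).const_mul x
    simp only [div_eq_mul_inv]
    have : HasDerivAt (fun s : ℝ => x * s⁻¹) (-(x * (s^2)⁻¹)) s := by
      refine h.congr_deriv (Eq.symm ?_)
      ring
    exact this.hasDerivWithinAt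
  have cancel : ∀ u : ℝ, 0 < u → x / (x / u) = u := fun u hu => by field_simp
  have hinj : Set.InjOn (fun s : ℝ => x / s) (Set.Ioi 0) := by
    intro s hs t ht h
    have h2 := congrArg (fun z => x / z) h
    simpa [cancel s hs, cancel t ht] using h2
  have key := integral_image_eq_integral_abs_deriv_smul measurableSet_Ioi hderiv hinj
    (fun u => Real.exp (-(x/u) - u) * u ^ (b - 1))
  rw [himg] at key
  rw [Ig_def, Ig_def, key, ← integral_const_mul]
  apply setIntegral_congr_fun measurableSet_Ioi
  intro s hs
  have hs0 : (0:ℝ) < s := hs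
  dsimp only
  have habs : |(-(x / s^2))| = x / s^2 := by
    rw [abs_neg, abs_of_pos (by positivity)]
  have e1 : x / (x / s) = s := by field_simp
  have e2 : (x / s) ^ (b - 1) = x ^ (b-1) * s ^ (1 - b) := by
    rw [div_rpow hx.le hs0.le, div_eq_mul_inv, ← Real.rpow_neg hs0.le,
      show -(b-1) = 1 - b by ring]
  rw [smul_eq_mul, habs, e1, e2]
  have e3 : x ^ (b-1) * x = x ^ b := by
    rw [Real.rpow_sub_one (ne_of_gt hx)]
    field_simp
  have e4 : s ^ (1-b) / s^2 = s ^ (-b - 1) := by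
    rw [show (s:ℝ)^2 = s ^ (2:ℝ) by rw [← Real.rpow_natCast s 2]; norm_num,
      ← Real.rpow_sub hs0]
    ring_nf
  calc x / s^2 * (Real.exp (-s - x/s) * (x ^ (b-1) * s ^ (1-b)))
      = (x ^ (b-1) * x) * (Real.exp (-s - x/s) * (s ^ (1-b) / s^2)) := by ring
    _ = x ^ b * (Real.exp (-(x/s) - s) * s ^ (-b-1)) := by
        rw [e3, e4, show -s - x/s = -(x/s) - s by ring]


lemma tendsto_Ig (b : ℝ) (hb : 0 < b) :
    Tendsto (fun x => Ig b x) (nhdsWithin 0 (Set.Ioi 0)) (nhds (Real.Gamma b)) := by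
  rw [Real.Gamma_eq_integral hb]
  have : ∀ x : ℝ, Ig b x = ∫ s in Set.Ioi (0:ℝ), Real.exp (-(x/s) - s) * s ^ (b - 1) :=
    fun x => Ig_def b x
  simp only [this]
  have : (∫ s in Set.Ioi (0:ℝ), Real.exp (-s) * s ^ (b-1))
      = ∫ s in Set.Ioi (0:ℝ), Real.exp (-(0/s) - s) * s ^ (b - 1) := by
    apply setIntegral_congr_fun measurableSet_Ioi
    intro s hs
    norm_num
  rw [this]
  apply tendsto_integral_filter_of_dominated_convergence
    (fun s => Real.exp (-s) * s ^ (b-1))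
  · exact Filter.Eventually.of_forall fun y =>
      (contOn y b).aestronglyMeasurable measurableSet_Ioi
  · refine eventually_nhdsWithin_of_forall fun x hx => ?_
    rw [ae_restrict_iff' measurableSet_Ioi]
    refine Filter.Eventually.of_forall fun s hs => ?_
    have hs0 : (0:ℝ) < s := hs
    have hx0 : (0:ℝ) < x := hx
    rw [Real.norm_eq_abs, abs_of_nonneg (by positivity)]
    have : Real.exp (-(x/s) - s) ≤ Real.exp (-s) := by
      apply Real.exp_le_exp.2
      have : 0 ≤ x / s := by positivity
      linarith
    exact mul_le_mul_of_nonneg_right this (by positivity)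
  · exact Real.GammaIntegral_convergent hb
  · rw [ae_restrict_iff' measurableSet_Ioi]
    refine Filter.Eventually.of_forall fun s hs => ?_
    have hs0 : (0:ℝ) < s := hs
    have hcont : ContinuousAt (fun x : ℝ => Real.exp (-(x/s) - s) * s ^ (b-1)) 0 := by
      apply ContinuousAt.mul
      · exact Real.continuous_exp.continuousAt.comp
          (((continuousAt_id.div_const s).neg).sub continuousAt_const)
      · exact continuousAt_const
    exact (hcont.tendsto.mono_left nhdsWithin_le_nhds)


noncomputable def ser (γ x : ℝ) : ℝ := ∑' n : ℕ, x ^ n / (n.factorial * Real.Gamma (n + γ))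

lemma gamma_fact_pos {γ : ℝ} (hγ : 0 < γ) (n : ℕ) :
    (0:ℝ) < n.factorial * Real.Gamma (n + γ) := by
  have h1 : (0:ℝ) < Real.Gamma (n + γ) := Real.Gamma_pos_of_pos (by positivity)
  positivity

lemma gamma_shift {γ : ℝ} (hγ : 0 < γ) (n : ℕ) :
    Real.Gamma ((n+1 : ℕ) + γ) = ((n:ℝ) + γ) * Real.Gamma (n + γ) := by
  have h : ((n+1 : ℕ) : ℝ) + γ = ((n:ℝ) + γ) + 1 := by push_cast; ring
  rw [h, Real.Gamma_add_one (by positivity)]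

lemma summable_ser {γ : ℝ} (hγ : 0 < γ) (x : ℝ) :
    Summable (fun n : ℕ => x ^ n / (n.factorial * Real.Gamma (n + γ))) := by
  apply summable_of_ratio_norm_eventually_le (r := 1/2) (by norm_num)
  filter_upwards [eventually_ge_atTop ⌈2*|x|⌉₊] with n hn
  have hcl : (2*|x| : ℝ) ≤ n := le_trans (Nat.le_ceil _) (by exact_mod_cast hn)
  have hg1 : (0:ℝ) < Real.Gamma (n + γ) := Real.Gamma_pos_of_pos (by positivity)
  have hfac : (0:ℝ) < (n.factorial : ℝ) := by positivity
  have e1 : x ^ (n+1) / (((n+1).factorial : ℝ) * Real.Gamma ((n+1:ℕ) + γ))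
      = x ^ n / ((n.factorial : ℝ) * Real.Gamma (n + γ)) * (x / (((n:ℝ)+1)*((n:ℝ)+γ))) := by
    rw [gamma_shift hγ, Nat.factorial_succ, pow_succ, div_mul_div_comm]
    congr 1
    push_cast
    ring
  rw [e1, norm_mul]
  have h2 : ‖x / (((n:ℝ)+1)*((n:ℝ)+γ))‖ ≤ 1/2 := by
    rw [Real.norm_eq_abs, abs_div, abs_of_pos (by positivity : (0:ℝ) < ((n:ℝ)+1)*((n:ℝ)+γ))]
    rw [div_le_iff₀ (by positivity)]
    have hx0 : (0:ℝ) ≤ |x| := abs_nonneg x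
    nlinarith [hcl]
  calc ‖x ^ n / ((n.factorial : ℝ) * Real.Gamma (n + γ))‖ * ‖x / (((n:ℝ)+1)*((n:ℝ)+γ))‖
      ≤ ‖x ^ n / ((n.factorial : ℝ) * Real.Gamma (n + γ))‖ * (1/2) :=
        mul_le_mul_of_nonneg_left h2 (norm_nonneg _)
    _ = 1/2 * ‖x ^ n / ((n.factorial : ℝ) * Real.Gamma (n + γ))‖ := by ring

lemma summable_deriv_aux {γ : ℝ} (R : ℝ) (hγ : 0 < γ) (hR : 0 < R) :
    Summable (fun n : ℕ => (n:ℝ) * R^(n-1) / (n.factorial * Real.Gamma (n + γ))) := by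
  apply summable_of_ratio_norm_eventually_le (r := 1/2) (by norm_num)
  filter_upwards [eventually_ge_atTop (max 1 ⌈2*R⌉₊)] with n hn
  have hn1 : 1 ≤ n := le_trans (le_max_left _ _) hn
  have hcl : (2*R : ℝ) ≤ (n:ℝ) + γ := by
    have h1 : (⌈2*R⌉₊ : ℝ) ≤ n := by exact_mod_cast le_trans (le_max_right 1 _) hn
    have := Nat.le_ceil (2*R)
    linarith
  have hg1 : (0:ℝ) < Real.Gamma (n + γ) := Real.Gamma_pos_of_pos (by positivity)
  have hfac : (0:ℝ) < (n.factorial : ℝ) := by positivity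
  set A := R^(n-1) / ((n.factorial:ℝ) * Real.Gamma (n+γ)) with hA
  have hApos : 0 < A := by positivity
  have e1 : ((n+1:ℕ):ℝ) * R^((n+1)-1) / (((n+1).factorial : ℝ) * Real.Gamma ((n+1:ℕ) + γ))
      = (R/((n:ℝ)+γ)) * A := by
    have hpow : R^n = R * R^(n-1) := by
      conv_lhs => rw [show n = 1 + (n-1) by omega]
      rw [pow_add, pow_one]
    rw [gamma_shift hγ, Nat.factorial_succ, Nat.add_sub_cancel, hA, div_mul_div_comm, ← hpow]
    push_cast
    rw [mul_comm (((n:ℝ)+1)) (R^n), mul_div_assoc]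
    congr 1
    rw [inv_eq_one_div, div_eq_div_iff (by positivity) (by positivity)]
    ring
  have e2 : ((n:ℕ):ℝ) * R^(n-1) / ((n.factorial : ℝ) * Real.Gamma ((n:ℕ) + γ)) = (n:ℝ) * A := by
    rw [hA]; ring
  rw [e1, e2, Real.norm_eq_abs, Real.norm_eq_abs,
    abs_of_nonneg (by positivity), abs_of_nonneg (by positivity)]
  have h2 : R/((n:ℝ)+γ) ≤ 1/2 := by
    rw [div_le_iff₀ (by positivity)]
    linarith
  have h5 : (1:ℝ) ≤ (n:ℝ) := by exact_mod_cast hn1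
  nlinarith [hApos, h2, h5]


lemma shift_term_eq {γ : ℝ} (hγ : 0 < γ) (x : ℝ) (n : ℕ) :
    ((n+1:ℕ):ℝ) * x ^ n / ((n+1).factorial * Real.Gamma ((n+1:ℕ) + γ))
      = x ^ n / (n.factorial * Real.Gamma (n + (γ+1))) := by
  rw [gamma_shift hγ, Nat.factorial_succ]
  push_cast
  have h1 : (0:ℝ) < Real.Gamma ((n:ℝ) + γ) := Real.Gamma_pos_of_pos (by positivity)
  have h2 : ((n:ℝ) + γ) = (n:ℝ) + γ := rfl
  have e : ((n:ℝ) + (γ+1)) = ((n:ℝ) + γ) + 1 := by ring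
  rw [e, Real.Gamma_add_one (by positivity)]
  have hfac : (0:ℝ) < (n.factorial:ℝ) := by positivity
  rw [div_eq_div_iff (by positivity) (by positivity)]
  ring

lemma hasDerivAt_ser {γ : ℝ} (hγ : 0 < γ) (x : ℝ) :
    HasDerivAt (fun y => ser γ y) (ser (γ+1) x) x := by
  set R := |x| + 1 with hR
  have hxR : x ∈ Set.Ioo (-R) R := by
    constructor <;> [linarith [neg_abs_le x]; linarith [le_abs_self x]]
  have key := hasDerivAt_tsum_of_isPreconnected
    (u := fun n : ℕ => (n:ℝ) * R^(n-1) / (n.factorial * Real.Gamma (n + γ)))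
    (t := Set.Ioo (-R) R)
    (g := fun (n : ℕ) (y : ℝ) => y ^ n / (n.factorial * Real.Gamma (n + γ)))
    (g' := fun (n : ℕ) (y : ℝ) => (n:ℝ) * y ^ (n-1) / (n.factorial * Real.Gamma (n + γ)))
    (summable_deriv_aux R hγ (by positivity)) isOpen_Ioo
    (convex_Ioo _ _).isPreconnected
    (fun n y _ => (hasDerivAt_pow n y).div_const _)
    (fun n y hy => ?_) hxR (summable_ser hγ x) hxR
  · -- identify the derivative sum with ser (γ+1) x
    have hsum : Summable (fun n : ℕ => (n:ℝ) * x ^ (n-1) / (n.factorial * Real.Gamma (n + γ))) := by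
      apply Summable.of_norm_bounded (summable_deriv_aux R hγ (by positivity))
      intro n
      rw [Real.norm_eq_abs, abs_div, abs_mul, abs_pow,
        abs_of_pos (gamma_fact_pos hγ n), Nat.abs_cast]
      gcongr
      linarith [le_refl (|x|)]
    have : (∑' n : ℕ, (n:ℝ) * x ^ (n-1) / (n.factorial * Real.Gamma (n + γ))) = ser (γ+1) x := by
      rw [Summable.tsum_eq_zero_add hsum]
      simp only [Nat.cast_zero, zero_mul, zero_div, zero_add]
      apply tsum_congr
      intro n
      rw [Nat.add_sub_cancel]
      exact shift_term_eq hγ x n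
    rw [this] at key
    exact key
  · -- bound
    rw [Real.norm_eq_abs, abs_div, abs_mul, abs_pow,
      abs_of_pos (gamma_fact_pos hγ n), Nat.abs_cast]
    have hyR : |y| ≤ R := by
      rw [abs_le]; exact ⟨hy.1.le, hy.2.le⟩
    gcongr


lemma ser_zero {γ : ℝ} (hγ : 0 < γ) : ser γ 0 = 1 / Real.Gamma γ := by
  rw [ser, tsum_eq_single 0]
  · simp
  · intro n hn
    rw [zero_pow hn, zero_div]

lemma summable_nser {γ : ℝ} (hγ : 0 < γ) (x : ℝ) (hx : 0 < x) :
    Summable (fun n : ℕ => (n:ℝ) * x ^ n / (n.factorial * Real.Gamma (n + γ))) := by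
  have h := (summable_deriv_aux x hγ hx).mul_left x
  apply h.congr
  intro n
  cases n with
  | zero => simp
  | succ m =>
    rw [Nat.add_sub_cancel]
    have : x ^ (m+1) = x * x ^ m := by rw [pow_succ]; ring
    rw [this]
    ring

lemma ser_rec {γ : ℝ} (hγ : 0 < γ) {x : ℝ} (hx : 0 < x) :
    γ * ser (γ+1) x + x * ser (γ+2) x = ser γ x := by
  have hγ1 : (0:ℝ) < γ + 1 := by linarith
  have hγ2 : (0:ℝ) < γ + 2 := by linarith
  -- ∑ t2 = x * ser (γ+2) x where t2 n = n * x^n / (n! * Γ(n+(γ+1)))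
  have hsum2 : Summable (fun n : ℕ => (n:ℝ) * x ^ n / (n.factorial * Real.Gamma (n + (γ+1)))) :=
    summable_nser hγ1 x hx
  have ht2 : (∑' n : ℕ, (n:ℝ) * x ^ n / (n.factorial * Real.Gamma (n + (γ+1))))
      = x * ser (γ+2) x := by
    rw [Summable.tsum_eq_zero_add hsum2]
    simp only [Nat.cast_zero, zero_mul, zero_div, zero_add]
    rw [ser, ← tsum_mul_left]
    apply tsum_congr
    intro n
    have e1 : ((n+1:ℕ):ℝ) * x ^ (n+1) / ((n+1).factorial * Real.Gamma ((n+1:ℕ) + (γ+1)))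
        = x * (((n+1:ℕ):ℝ) * x ^ n / ((n+1).factorial * Real.Gamma ((n+1:ℕ) + (γ+1)))) := by
      rw [pow_succ]; ring
    rw [e1, shift_term_eq hγ1 x n, show γ + 1 + 1 = γ + 2 by ring]
  have hsum1 : Summable (fun n : ℕ => γ * (x ^ n / (n.factorial * Real.Gamma (n + (γ+1))))) :=
    (summable_ser hγ1 x).mul_left γ
  have key : ser γ x = ∑' n : ℕ,
      (γ * (x ^ n / (n.factorial * Real.Gamma (n + (γ+1))))
        + (n:ℝ) * x ^ n / (n.factorial * Real.Gamma (n + (γ+1)))) := by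
    rw [ser]
    apply tsum_congr
    intro n
    have hΓ : (0:ℝ) < Real.Gamma ((n:ℝ) + γ) := Real.Gamma_pos_of_pos (by positivity)
    have hfac : (0:ℝ) < (n.factorial:ℝ) := by positivity
    have e : ((n:ℝ) + (γ+1)) = ((n:ℝ) + γ) + 1 := by ring
    rw [e, Real.Gamma_add_one (by positivity : ((n:ℝ) + γ) ≠ 0)]
    rw [mul_div_assoc' γ, div_add_div _ _ (by positivity : ((n.factorial:ℝ) * (((n:ℝ)+γ) * Real.Gamma ((n:ℝ)+γ))) ≠ 0) (by positivity : ((n.factorial:ℝ) * (((n:ℝ)+γ) * Real.Gamma ((n:ℝ)+γ))) ≠ 0),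
      div_eq_div_iff (by positivity) (by positivity)]
    ring
  rw [key, Summable.tsum_add hsum1 hsum2, tsum_mul_left, ht2, ← ser]


noncomputable def Uf (α x : ℝ) : ℝ :=
  Real.Gamma α * Real.Gamma (1-α) * (ser α x - x ^ (1-α) * ser (2-α) x)

noncomputable def Vf (α x : ℝ) : ℝ :=
  Real.Gamma α * Real.Gamma (1-α) * (ser (1-α) x - x ^ α * ser (α+1) x)

lemma hasDerivAt_U {α : ℝ} (hα0 : 0 < α) (hα1 : α < 1) {x : ℝ} (hx : 0 < x) :
    HasDerivAt (fun y => Uf α y) (-(x^(-α)) * Vf α x) x := by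
  have h1α : (0:ℝ) < 1 - α := by linarith
  have h2α : (0:ℝ) < 2 - α := by linarith
  have hp := hasDerivAt_ser hα0 x
  have hv := hasDerivAt_ser h2α x
  have hrpow : HasDerivAt (fun y : ℝ => y ^ (1-α)) ((1-α) * x ^ (1-α-1)) x :=
    Real.hasDerivAt_rpow_const (Or.inl hx.ne')
  have h1 := ((hp.sub (hrpow.mul hv)).const_mul (Real.Gamma α * Real.Gamma (1-α)))
  have heq : ∀ y : ℝ, Real.Gamma α * Real.Gamma (1-α) * (ser α y - y ^ (1-α) * ser (2-α) y)
      = Uf α y := fun y => rfl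
  refine h1.congr_deriv (Eq.symm ?_)
  rw [Vf, ← ser_rec h1α hx,
    show (1-α)+1 = 2-α by ring, show (1-α)+2 = 3-α by ring, show (2-α)+1 = 3-α by ring,
    show (1-α-1 : ℝ) = -α by ring]
  have hxa : x ^ (-α) * x ^ α = 1 := by
    rw [← Real.rpow_add hx]; simp
  have hxc : x ^ (-α) * x = x ^ (1-α) := by
    nth_rewrite 2 [← Real.rpow_one x]
    rw [← Real.rpow_add hx, show -α + 1 = 1 - α by ring]
  linear_combination (Real.Gamma α * Real.Gamma (1-α) * ser (α+1) x) * hxa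
    - (Real.Gamma α * Real.Gamma (1-α) * ser (3-α) x) * hxc

lemma hasDerivAt_V {α : ℝ} (hα0 : 0 < α) (hα1 : α < 1) {x : ℝ} (hx : 0 < x) :
    HasDerivAt (fun y => Vf α y) (-(x^(α-1)) * Uf α x) x := by
  have h1α : (0:ℝ) < 1 - α := by linarith
  have hα1' : (0:ℝ) < α + 1 := by linarith
  have hr := hasDerivAt_ser h1α x
  have hq := hasDerivAt_ser hα1' x
  have hrpow : HasDerivAt (fun y : ℝ => y ^ α) (α * x ^ (α-1)) x :=
    Real.hasDerivAt_rpow_const (Or.inl hx.ne')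
  have h1 := ((hr.sub (hrpow.mul hq)).const_mul (Real.Gamma α * Real.Gamma (1-α)))
  have heq : ∀ y : ℝ, Real.Gamma α * Real.Gamma (1-α) * (ser (1-α) y - y ^ α * ser (α+1) y)
      = Vf α y := fun y => rfl
  refine h1.congr_deriv (Eq.symm ?_)
  rw [Uf, ← ser_rec hα0 hx, show (1-α)+1 = 2-α by ring, show α+1+1 = α+2 by ring]
  have hxa : x ^ (α-1) * x ^ (1-α) = 1 := by
    rw [← Real.rpow_add hx]; simp
  have hxc : x ^ (α-1) * x = x ^ α := by
    nth_rewrite 2 [← Real.rpow_one x]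
    rw [← Real.rpow_add hx, show α - 1 + 1 = α by ring]
  linear_combination (Real.Gamma α * Real.Gamma (1-α) * ser (2-α) x) * hxa
    - (Real.Gamma α * Real.Gamma (1-α) * ser (α+2) x) * hxc


lemma tendsto_ser_zero {γ : ℝ} (hγ : 0 < γ) :
    Tendsto (fun x => ser γ x) (nhdsWithin 0 (Set.Ioi 0)) (nhds (1 / Real.Gamma γ)) := by
  rw [← ser_zero hγ]
  exact ((hasDerivAt_ser hγ 0).continuousAt.tendsto).mono_left nhdsWithin_le_nhds

lemma tendsto_rpow_zero {β : ℝ} (hβ : 0 < β) :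
    Tendsto (fun x : ℝ => x ^ β) (nhdsWithin 0 (Set.Ioi 0)) (nhds 0) := by
  have h := (Real.continuousAt_rpow_const 0 β (Or.inr hβ.le)).tendsto.mono_left
    (nhdsWithin_le_nhds (s := Set.Ioi 0))
  rwa [Real.zero_rpow hβ.ne'] at h

lemma tendsto_Uf {α : ℝ} (hα0 : 0 < α) (hα1 : α < 1) :
    Tendsto (fun x => Uf α x) (nhdsWithin 0 (Set.Ioi 0)) (nhds (Real.Gamma (1-α))) := by
  have h1α : (0:ℝ) < 1 - α := by linarith
  have h2α : (0:ℝ) < 2 - α := by linarith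
  have h := tendsto_const_nhds (x := Real.Gamma α * Real.Gamma (1-α))
      (f := nhdsWithin (0:ℝ) (Set.Ioi 0)) |>.mul
    ((tendsto_ser_zero hα0).sub ((tendsto_rpow_zero h1α).mul (tendsto_ser_zero h2α)))
  have e : Real.Gamma α * Real.Gamma (1-α) * (1 / Real.Gamma α - 0 * (1 / Real.Gamma (2-α)))
      = Real.Gamma (1-α) := by
    have hΓ : Real.Gamma α ≠ 0 := (Real.Gamma_pos_of_pos hα0).ne'
    field_simp
    ring
  rw [e] at h
  exact h

lemma tendsto_Vf {α : ℝ} (hα0 : 0 < α) (hα1 : α < 1) :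
    Tendsto (fun x => Vf α x) (nhdsWithin 0 (Set.Ioi 0)) (nhds (Real.Gamma α)) := by
  have h1α : (0:ℝ) < 1 - α := by linarith
  have hα1' : (0:ℝ) < α + 1 := by linarith
  have h := tendsto_const_nhds (x := Real.Gamma α * Real.Gamma (1-α))
      (f := nhdsWithin (0:ℝ) (Set.Ioi 0)) |>.mul
    ((tendsto_ser_zero h1α).sub ((tendsto_rpow_zero hα0).mul (tendsto_ser_zero hα1')))
  have e : Real.Gamma α * Real.Gamma (1-α) * (1 / Real.Gamma (1-α) - 0 * (1 / Real.Gamma (α+1)))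
      = Real.Gamma α := by
    have hΓ : Real.Gamma (1-α) ≠ 0 := (Real.Gamma_pos_of_pos h1α).ne'
    field_simp
    ring
  rw [e] at h
  exact h


noncomputable def D1f (α z : ℝ) : ℝ := Ig (1-α) z - Uf α z
noncomputable def D2f (α z : ℝ) : ℝ := Ig α z - Vf α z
noncomputable def Ff (α z : ℝ) : ℝ := D1f α z ^ 2 + D2f α z ^ 2
noncomputable def Omf (α z : ℝ) : ℝ := z^(1-α)/(1-α) + z^α/α
noncomputable def Ef (α z : ℝ) : ℝ := Ff α z * Real.exp (-(Omf α z))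
noncomputable def FDf (α z : ℝ) : ℝ :=
  2 * D1f α z ^ 1 * (-(z^(-α)) * D2f α z) + 2 * D2f α z ^ 1 * (-(z^(α-1)) * D1f α z)
noncomputable def EDf (α z : ℝ) : ℝ :=
  FDf α z * Real.exp (-(Omf α z))
    + Ff α z * (Real.exp (-(Omf α z)) * -(z^(-α) + z^(α-1)))

lemma Ig_eq_Uf {α : ℝ} (hα0 : 0 < α) (hα1 : α < 1) {x : ℝ} (hx : 0 < x) :
    Ig (1-α) x = Uf α x := by
  have h1α : (0:ℝ) < 1 - α := by linarith
  -- derivative of D1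
  have hD1 : ∀ y : ℝ, 0 < y → HasDerivAt (fun z => D1f α z) (-(y^(-α)) * D2f α y) y := by
    intro y hy
    have hIg := hasDerivAt_Ig (1-α) hy
    have e1 : Ig (1-α-1) y = y^(-α) * Ig α y := by
      rw [show (1-α-1 : ℝ) = -α by ring, Ig_symm (-α) hy, neg_neg]
    rw [e1] at hIg
    have h := hIg.sub (hasDerivAt_U hα0 hα1 hy)
    have : -(y ^ (-α) * Ig α y) - -y ^ (-α) * Vf α y = -(y^(-α)) * D2f α y := by
      rw [D2f]; ring
    rw [this] at h
    exact h
  have hD2 : ∀ y : ℝ, 0 < y → HasDerivAt (fun z => D2f α z) (-(y^(α-1)) * D1f α y) y := by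
    intro y hy
    have hIg := hasDerivAt_Ig α hy
    have e1 : Ig (α-1) y = y^(α-1) * Ig (1-α) y := by
      rw [Ig_symm (α-1) hy, show -(α-1) = 1-α by ring]
    rw [e1] at hIg
    have h := hIg.sub (hasDerivAt_V hα0 hα1 hy)
    have : -(y ^ (α-1) * Ig (1-α) y) - -y ^ (α-1) * Uf α y = -(y^(α-1)) * D1f α y := by
      rw [D1f]; ring
    rw [this] at h
    exact h
  -- derivative of F
  have hFd : ∀ y : ℝ, 0 < y → HasDerivAt (fun z => Ff α z) (FDf α y) y := by
    intro y hy
    have h := ((hD1 y hy).pow 2).add ((hD2 y hy).pow 2)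
    have e : ∀ z : ℝ, D1f α z ^ 2 + D2f α z ^ 2 = Ff α z := fun z => rfl
    exact h.congr_deriv rfl
  -- derivative of Om
  have hOmd : ∀ y : ℝ, 0 < y → HasDerivAt (fun z => Omf α z) (y^(-α) + y^(α-1)) y := by
    intro y hy
    have h1 : HasDerivAt (fun z : ℝ => z^(1-α)/(1-α)) (y^(-α)) y := by
      have h := (Real.hasDerivAt_rpow_const (x := y) (p := 1-α) (Or.inl hy.ne')).div_const (1-α)
      refine h.congr_deriv (Eq.symm ?_)
      rw [show (1-α-1 : ℝ) = -α by ring]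
      field_simp
    have h2 : HasDerivAt (fun z : ℝ => z^α/α) (y^(α-1)) y := by
      have h := (Real.hasDerivAt_rpow_const (x := y) (p := α) (Or.inl hy.ne')).div_const α
      refine h.congr_deriv (Eq.symm ?_)
      field_simp
    exact h1.add h2
  -- derivative of E
  have hEd : ∀ y : ℝ, 0 < y → HasDerivAt (fun z => Ef α z) (EDf α y) y := by
    intro y hy
    have h := (hFd y hy).mul (((hOmd y hy).neg).exp)
    exact h
  -- E' ≤ 0
  have hEDnonpos : ∀ y : ℝ, 0 < y → EDf α y ≤ 0 := by
    intro y hy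
    have key : EDf α y
        = -(Real.exp (-(Omf α y)) * ((y^(-α) + y^(α-1)) * (D1f α y + D2f α y)^2)) := by
      rw [EDf, FDf, Ff]; ring
    rw [key]
    apply neg_nonpos_of_nonneg
    exact mul_nonneg (Real.exp_pos _).le (mul_nonneg
      (add_nonneg (Real.rpow_nonneg hy.le _) (Real.rpow_nonneg hy.le _)) (sq_nonneg _))
  -- antitone
  have hanti : ∀ ε : ℝ, 0 < ε → ε ≤ x → Ef α x ≤ Ef α ε := by
    intro ε hε hεx
    have hcont : ContinuousOn (fun z => Ef α z) (Set.Icc ε x) := fun y hy =>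
      ((hEd y (lt_of_lt_of_le hε hy.1)).continuousAt).continuousWithinAt
    have hdiff : DifferentiableOn ℝ (fun z => Ef α z) (interior (Set.Icc ε x)) := by
      intro y hy
      rw [interior_Icc] at hy
      exact ((hEd y (lt_of_lt_of_le hε hy.1.le)).differentiableAt).differentiableWithinAt
    have hder : ∀ y ∈ interior (Set.Icc ε x), deriv (fun z => Ef α z) y ≤ 0 := by
      intro y hy
      rw [interior_Icc] at hy
      have hy0 : 0 < y := lt_trans hε hy.1
      rw [(hEd y hy0).deriv]
      exact hEDnonpos y hy0
    exact antitoneOn_of_deriv_nonpos (convex_Icc ε x) hcont hdiff hder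
      (Set.left_mem_Icc.2 hεx) (Set.right_mem_Icc.2 hεx) hεx
  -- limit of E at 0+
  have hEto : Tendsto (fun z => Ef α z) (nhdsWithin 0 (Set.Ioi 0)) (nhds 0) := by
    have hd1 : Tendsto (fun z => D1f α z) (nhdsWithin 0 (Set.Ioi 0)) (nhds 0) := by
      have h := (tendsto_Ig (1-α) h1α).sub (tendsto_Uf hα0 hα1)
      rw [sub_self] at h
      exact h
    have hd2 : Tendsto (fun z => D2f α z) (nhdsWithin 0 (Set.Ioi 0)) (nhds 0) := by
      have h := (tendsto_Ig α hα0).sub (tendsto_Vf hα0 hα1)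
      rw [sub_self] at h
      exact h
    have hF : Tendsto (fun z => Ff α z) (nhdsWithin 0 (Set.Ioi 0)) (nhds 0) := by
      have h := (hd1.pow 2).add (hd2.pow 2)
      norm_num at h
      exact h
    have hOm : Tendsto (fun z => Real.exp (-(Omf α z))) (nhdsWithin 0 (Set.Ioi 0)) (nhds 1) := by
      have h1 : Tendsto (fun z : ℝ => z ^ (1-α)) (nhdsWithin 0 (Set.Ioi 0)) (nhds 0) :=
        tendsto_rpow_zero h1α
      have h2 : Tendsto (fun z : ℝ => z ^ α) (nhdsWithin 0 (Set.Ioi 0)) (nhds 0) :=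
        tendsto_rpow_zero hα0
      have h3 := ((h1.div_const (1-α)).add (h2.div_const α)).neg
      have h := (Real.continuous_exp.tendsto (-((0:ℝ)/(1-α) + (0:ℝ)/α))).comp h3
      simp only [Function.comp_def] at h
      norm_num [Real.exp_zero] at h
      have e : ∀ z : ℝ, Real.exp (-(z ^ α / α) + -(z ^ (1-α) / (1-α))) = Real.exp (-(Omf α z)) := by
        intro z
        rw [Omf]
        ring_nf
      simpa only [e] using h
    have h := hF.mul hOm
    norm_num at h
    exact h
  -- conclude
  have hEx_le : Ef α x ≤ 0 := by
    refine ge_of_tendsto hEto ?_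
    filter_upwards [Ioo_mem_nhdsGT_of_mem (Set.left_mem_Ico.2 hx)] with ε hε
    exact hanti ε hε.1 hε.2.le
  have hEx_ge : 0 ≤ Ef α x := by
    rw [Ef, Ff]
    positivity
  have hEx : Ef α x = 0 := le_antisymm hEx_le hEx_ge
  have hFx : Ff α x = 0 := by
    rw [Ef] at hEx
    rcases mul_eq_zero.1 hEx with h | h
    · exact h
    · exact absurd h (Real.exp_pos _).ne'
  have hD1x : D1f α x = 0 := by
    rw [Ff] at hFx
    nlinarith [sq_nonneg (D1f α x), sq_nonneg (D2f α x)]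
  rw [D1f, sub_eq_zero] at hD1x
  exact hD1x

end BK

open BK

/-- For 0 < α < 1 and c > 0,
`(1/Γ(1-α)) ∫_0^∞ exp(-c²/s - s) s^{-α} ds = 2 Γ(1-α)⁻¹ c^{1-α} K_{1-α}(2c)`. -/
theorem integral_exp_eq_besselK (α c : ℝ) (hα0 : 0 < α) (hα1 : α < 1) (hc : 0 < c) :
    (Real.Gamma (1 - α))⁻¹ * ∫ s in Set.Ioi (0 : ℝ), Real.exp (-(c ^ 2 / s) - s) * s ^ (-α)
      = 2 * (Real.Gamma (1 - α))⁻¹ * c ^ (1 - α) * besselK (1 - α) (2 * c) := by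
  have hc2 : (0:ℝ) < c^2 := by positivity
  have h1α : (0:ℝ) < 1-α := by linarith
  have hL : (∫ s in Set.Ioi (0 : ℝ), Real.exp (-(c ^ 2 / s) - s) * s ^ (-α)) = Ig (1-α) (c^2) := by
    rw [Ig_def]
    apply setIntegral_congr_fun measurableSet_Ioi
    intro s hs
    rw [show (1-α)-1 = -α by ring]
  have h2c : 2 * c / 2 = c := by ring
  have hIb1 : besselI (-(1-α)) (2*c) = c ^ (α-1) * ser α (c^2) := by
    rw [besselI, h2c, show -(1-α) = α - 1 by ring]
    congr 1
    rw [ser]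
    apply tsum_congr
    intro n
    rw [pow_mul, show ((n:ℝ) + (α-1) + 1 : ℝ) = (n:ℝ) + α by ring]
  have hIb2 : besselI (1-α) (2*c) = c ^ (1-α) * ser (2-α) (c^2) := by
    rw [besselI, h2c]
    congr 1
    rw [ser]
    apply tsum_congr
    intro n
    rw [pow_mul, show ((n:ℝ) + (1-α) + 1 : ℝ) = (n:ℝ) + (2-α) by ring]
  rw [hL, Ig_eq_Uf hα0 hα1 hc2, besselK, hIb1, hIb2, show (1:ℝ) - (1-α) = α by ring, Uf]
  have hr1 : c^((1:ℝ)-α) * c^(α-1) = 1 := by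
    rw [← Real.rpow_add hc]
    norm_num
  have hr2 : (c^2 : ℝ)^((1:ℝ)-α) = c^((1:ℝ)-α) * c^((1:ℝ)-α) := by
    rw [show (c^2 : ℝ) = c * c by ring, Real.mul_rpow hc.le hc.le]
  rw [hr2]
  linear_combination (-((Real.Gamma (1-α))⁻¹ * Real.Gamma (1-α) * Real.Gamma α
    * ser α (c^2))) * hr1
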